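/- The Bell–CHSH inequality for factorizable models: let ρ be a probability measure on a measurable space Λ, and let f, f', g, g' : Λ → ℝ be measurable functions with |f λ| ≤ 1, |f' λ| ≤ 1, |g λ| ≤ 1, |g' λ| ≤ 1 for all λ ∈ Λ. Then |∫ f·g dρ + ∫ f·g' dρ + ∫ f'·g dρ − ∫ f'·g' dρ| ≤ 2. -/

import Mathlib

open MeasureTheory

lemma chsh_pointwise (a a' b b' : ℝ) (ha : |a| ≤ 1) (ha' : |a'| ≤ 1)
    (hb : |b| ≤ 1) (hb' : |b'| ≤ 1) :
    |a * b + a * b' + a' * b - a' * b'| ≤ 2 := by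
  have h1 : |a * b + a * b'| ≤ |b + b'| := by
    rw [← mul_add, abs_mul]
    calc |a| * |b + b'| ≤ 1 * |b + b'| := by
          exact mul_le_mul_of_nonneg_right ha (abs_nonneg _)
      _ = |b + b'| := one_mul _
  have h2 : |a' * b - a' * b'| ≤ |b - b'| := by
    rw [← mul_sub, abs_mul]
    calc |a'| * |b - b'| ≤ 1 * |b - b'| := by
          exact mul_le_mul_of_nonneg_right ha' (abs_nonneg _)
      _ = |b - b'| := one_mul _
  have key : |b + b'| + |b - b'| ≤ 2 := by
    rcases abs_le.mp hb with ⟨hb1, hb2⟩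
    rcases abs_le.mp hb' with ⟨hb'1, hb'2⟩
    rcases abs_cases (b + b') with ⟨e1, _⟩ | ⟨e1, _⟩ <;>
      rcases abs_cases (b - b') with ⟨e2, _⟩ | ⟨e2, _⟩ <;>
      rw [e1, e2] <;> linarith
  calc |a * b + a * b' + a' * b - a' * b'|
      = |(a * b + a * b') + (a' * b - a' * b')| := by ring_nf
    _ ≤ |a * b + a * b'| + |a' * b - a' * b'| := abs_add_le _ _
    _ ≤ |b + b'| + |b - b'| := add_le_add h1 h2
    _ ≤ 2 := key

/-- The Bell–CHSH inequality for factorizable models: for a probability measure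
`ρ` over hidden states and measurable single-wing expectation functions
`f, f', g, g'` bounded by 1 in absolute value, the CHSH combination of the
correlations is bounded by 2. -/
theorem bell_chsh_inequality
    {Λ : Type*} [MeasurableSpace Λ] (ρ : Measure Λ) [IsProbabilityMeasure ρ]
    (f f' g g' : Λ → ℝ)
    (hf : Measurable f) (hf' : Measurable f')
    (hg : Measurable g) (hg' : Measurable g')
    (hfb : ∀ l, |f l| ≤ 1) (hf'b : ∀ l, |f' l| ≤ 1)
    (hgb : ∀ l, |g l| ≤ 1) (hg'b : ∀ l, |g' l| ≤ 1) :
    |(∫ l, f l * g l ∂ρ) + (∫ l, f l * g' l ∂ρ) +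
      (∫ l, f' l * g l ∂ρ) - (∫ l, f' l * g' l ∂ρ)| ≤ 2 := by
  have int : ∀ (u v : Λ → ℝ), Measurable u → Measurable v →
      (∀ l, |u l| ≤ 1) → (∀ l, |v l| ≤ 1) → Integrable (fun l => u l * v l) ρ := by
    intro u v hu hv hub hvb
    apply Integrable.mono' (integrable_const (1 : ℝ))
      ((hu.mul hv).aestronglyMeasurable)
    filter_upwards with l
    rw [Pi.mul_apply, norm_mul]
    calc ‖u l‖ * ‖v l‖ ≤ 1 * 1 := by
          exact mul_le_mul (hub l) (hvb l) (abs_nonneg _) zero_le_one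
      _ = 1 := one_mul 1
  have i1 := int f g hf hg hfb hgb
  have i2 := int f g' hf hg' hfb hg'b
  have i3 := int f' g hf' hg hf'b hgb
  have i4 := int f' g' hf' hg' hf'b hg'b
  have hcomb : (∫ l, f l * g l ∂ρ) + (∫ l, f l * g' l ∂ρ) +
      (∫ l, f' l * g l ∂ρ) - (∫ l, f' l * g' l ∂ρ)
      = ∫ l, (f l * g l + f l * g' l + f' l * g l - f' l * g' l) ∂ρ := by
    have eA : ∫ l, (f l * g l + f l * g' l + f' l * g l - f' l * g' l) ∂ρ
        = (∫ l, (f l * g l + f l * g' l + f' l * g l) ∂ρ) - ∫ l, f' l * g' l ∂ρ :=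
      integral_sub ((i1.add i2).add i3) i4
    have eB : ∫ l, (f l * g l + f l * g' l + f' l * g l) ∂ρ
        = (∫ l, (f l * g l + f l * g' l) ∂ρ) + ∫ l, f' l * g l ∂ρ :=
      integral_add (i1.add i2) i3
    have eC : ∫ l, (f l * g l + f l * g' l) ∂ρ
        = (∫ l, f l * g l ∂ρ) + ∫ l, f l * g' l ∂ρ :=
      integral_add i1 i2
    rw [eA, eB, eC]
  rw [hcomb]
  calc |∫ l, (f l * g l + f l * g' l + f' l * g l - f' l * g' l) ∂ρ|
      = ‖∫ l, (f l * g l + f l * g' l + f' l * g l - f' l * g' l) ∂ρ‖ :=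
        (Real.norm_eq_abs _).symm
    _ ≤ ∫ l, ‖f l * g l + f l * g' l + f' l * g l - f' l * g' l‖ ∂ρ :=
        norm_integral_le_integral_norm _
    _ = ∫ l, |f l * g l + f l * g' l + f' l * g l - f' l * g' l| ∂ρ := by
        simp [Real.norm_eq_abs]
    _ ≤ ∫ l, (2 : ℝ) ∂ρ := by
        apply integral_mono_of_nonneg
        · filter_upwards with l; exact abs_nonneg _
        · exact integrable_const 2
        · filter_upwards with l
          exact chsh_pointwise _ _ _ _ (hfb l) (hf'b l) (hgb l) (hg'b l)
    _ = 2 := by simp
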